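/- Let F = [γ_0, γ_1, …, γ_{n−1}] be an m×n Ferrers diagram (1 ≤ γ_0 ≤ ⋯ ≤ γ_{n−1} = m, γ first row full). For 0 ≤ i ≤ δ−1, let v_i be the number of dots of F not contained in the first i rows nor in the rightmost δ−1−i columns. Then any F_q-linear code C of matrices supported on F in which every nonzero matrix has rank at least δ satisfies dim_{F_q}(C) ≤ min_{0 ≤ i ≤ δ−1} v_i. -/

import Mathlib

/-- If all columns of `A` outside a finite set `s` vanish, the rank of `A` is at most `s.card`. -/
lemma es_rank_le_cols {F : Type*} [Field F] {m n : ℕ}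
    (A : Matrix (Fin m) (Fin n) F) (s : Finset (Fin n))
    (h : ∀ c ∉ s, ∀ r, A r c = 0) : A.rank ≤ s.card := by
  classical
  rw [Matrix.rank]
  have hle : LinearMap.range A.mulVecLin ≤
      Submodule.span F ((s.image fun c => A.transpose c : Finset (Fin m → F)) : Set (Fin m → F)) := by
    rintro v ⟨x, rfl⟩
    have hv : A.mulVecLin x = ∑ c ∈ s, x c • A.transpose c := by
      funext r
      have : A.mulVecLin x r = ∑ c : Fin n, x c * A r c := by
        simp [Matrix.mulVecLin_apply, Matrix.mulVec, dotProduct, mul_comm]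
      rw [this, ← Finset.sum_subset s.subset_univ (fun c _ hc => by rw [h c hc r, mul_zero])]
      simp [Matrix.transpose]
    rw [hv]
    exact Submodule.sum_mem _ fun c hc => Submodule.smul_mem _ _
      (Submodule.subset_span (by exact Finset.mem_coe.2 (Finset.mem_image_of_mem _ hc)))
  calc Module.finrank F (LinearMap.range A.mulVecLin)
      ≤ Module.finrank F (Submodule.span F
          ((s.image fun c => A.transpose c : Finset (Fin m → F)) : Set (Fin m → F))) :=
        Submodule.finrank_mono hle
    _ ≤ (s.image fun c => A.transpose c).card := finrank_span_finset_le_card _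
    _ ≤ s.card := Finset.card_image_le

/-- If all rows of `A` with index `≥ i` vanish, the rank of `A` is at most `i`. -/
lemma es_rank_le_rows {F : Type*} [Field F] {m n : ℕ}
    (A : Matrix (Fin m) (Fin n) F) (i : ℕ)
    (h : ∀ r : Fin m, i ≤ (r : ℕ) → ∀ c, A r c = 0) : A.rank ≤ i := by
  rw [← Matrix.rank_transpose]
  refine le_trans (es_rank_le_cols A.transpose
    (Finset.univ.filter fun r : Fin m => (r : ℕ) < i) ?_) ?_
  · intro r hr c
    exact h r (by simpa using hr) c
  · refine le_trans (Finset.card_le_card_of_injOn (fun r : Fin m => (r : ℕ))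
      (fun r hr => Finset.mem_range.2 (by simpa using hr))
      (fun a _ b _ hab => Fin.val_injective hab)) (by simp)

/-- Rank is subadditive. -/
lemma es_rank_add_le {F : Type*} [Field F] {m n : ℕ}
    (A B : Matrix (Fin m) (Fin n) F) : (A + B).rank ≤ A.rank + B.rank := by
  rw [Matrix.rank, Matrix.rank, Matrix.rank, Matrix.mulVecLin_add]
  have hle : LinearMap.range (A.mulVecLin + B.mulVecLin) ≤
      LinearMap.range A.mulVecLin ⊔ LinearMap.range B.mulVecLin := by
    rintro v ⟨x, rfl⟩
    exact Submodule.mem_sup.2 ⟨A.mulVecLin x, ⟨x, rfl⟩, B.mulVecLin x, ⟨x, rfl⟩, rfl⟩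
  exact le_trans (Submodule.finrank_mono hle)
    (Submodule.finrank_add_le_finrank_add_finrank _ _)

/-- Etzion–Silberstein bound: dim C ≤ min_i v_i, where v_i is the number of dots of the
Ferrers diagram outside the first i rows and the rightmost δ-1-i columns. -/
theorem stmt10 {F : Type*} [Field F] [Fintype F] {m n δ : ℕ}
    (hδ1 : 1 ≤ δ) (hδn : δ ≤ n)
    (γ : ℕ → ℕ) (hmono : ∀ i j, i ≤ j → j < n → γ i ≤ γ j)
    (hγ0 : 1 ≤ γ 0) (hγlast : γ (n - 1) = m)
    (C : Submodule F (Matrix (Fin m) (Fin n) F))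
    (hsupp : ∀ A ∈ C, ∀ (i : Fin m) (j : Fin n), γ (j : ℕ) ≤ (i : ℕ) → A i j = 0)
    (hmin : ∀ A ∈ C, A ≠ 0 → δ ≤ A.rank) :
    ∀ i < δ, Module.finrank F C ≤
      ∑ j ∈ Finset.univ.filter (fun j : Fin n => (j : ℕ) + (δ - 1 - i) < n),
        (γ (j : ℕ) - i) := by
  intro i hi
  set k : ℕ := δ - 1 - i with hk
  have hγm : ∀ c : Fin n, γ (c : ℕ) ≤ m := by
    intro c
    have hc : (c : ℕ) ≤ n - 1 := by omega
    have := hmono (c : ℕ) (n - 1) hc (by omega)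
    omega
  -- the restriction map to the dot positions outside the first i rows / last k columns
  set P : Fin m × Fin n → Prop :=
    fun p => i ≤ (p.1 : ℕ) ∧ (p.1 : ℕ) < γ (p.2 : ℕ) ∧ (p.2 : ℕ) + k < n with hP
  let φ : C →ₗ[F] ({p : Fin m × Fin n // P p} → F) :=
    { toFun := fun A p => (A : Matrix (Fin m) (Fin n) F) p.1.1 p.1.2
      map_add' := fun A B => rfl
      map_smul' := fun c A => rfl }
  have hinj : Function.Injective φ := by
    rw [injective_iff_map_eq_zero]
    rintro ⟨A, hA⟩ hφ
    have hzero : ∀ p : Fin m × Fin n, P p → A p.1 p.2 = 0 := by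
      intro p hp
      exact congrFun hφ ⟨p, hp⟩
    -- split A into top i rows and the rest
    by_contra hAne
    have hAne' : A ≠ 0 := by
      simpa [Submodule.mk_eq_zero] using hAne
    set B : Matrix (Fin m) (Fin n) F := fun r c => if (r : ℕ) < i then A r c else 0 with hB
    set D : Matrix (Fin m) (Fin n) F := fun r c => if (r : ℕ) < i then 0 else A r c with hD
    have hBD : A = B + D := by
      funext r c
      show A r c = B r c + D r c
      by_cases h : (r : ℕ) < i <;> simp [hB, hD, h]
    have hrB : B.rank ≤ i := by
      refine es_rank_le_rows B i fun r hr c => ?_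
      simp [hB, Nat.not_lt.2 hr]
    have hrD : D.rank ≤ k := by
      refine le_trans (es_rank_le_cols D
        (Finset.univ.filter fun c : Fin n => ¬ ((c : ℕ) + k < n)) ?_) ?_
      · intro c hc r
        have hcn : (c : ℕ) + k < n := by simpa using hc
        by_cases hri : (r : ℕ) < i
        · simp [hD, hri]
        · by_cases hrg : (r : ℕ) < γ (c : ℕ)
          · have := hzero (r, c) ⟨Nat.not_lt.1 hri, hrg, hcn⟩
            simpa [hD, hri] using this
          · have := hsupp A hA r c (Nat.not_lt.1 hrg)
            simpa [hD, hri] using this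
      · have hmaps : ∀ c ∈ (Finset.univ.filter fun c : Fin n => ¬ ((c : ℕ) + k < n)),
            ((c : ℕ) - (n - k)) ∈ Finset.range k := by
          intro c hc
          have hc' : ¬ ((c : ℕ) + k < n) := by simpa using hc
          have := c.isLt
          exact Finset.mem_range.2 (by omega)
        have hinjOn : Set.InjOn (fun c : Fin n => (c : ℕ) - (n - k))
            (Finset.univ.filter fun c : Fin n => ¬ ((c : ℕ) + k < n)) := by
          intro a ha b hb hab
          have ha' : ¬ ((a : ℕ) + k < n) := by simpa using ha
          have hb' : ¬ ((b : ℕ) + k < n) := by simpa using hb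
          have h1 := a.isLt; have h2 := b.isLt
          exact Fin.ext (by simp only at hab; omega)
        exact le_trans (Finset.card_le_card_of_injOn _ hmaps hinjOn) (by simp)
    have hrank : A.rank ≤ δ - 1 := by
      calc A.rank = (B + D).rank := by rw [← hBD]
        _ ≤ B.rank + D.rank := es_rank_add_le B D
        _ ≤ i + k := add_le_add hrB hrD
        _ ≤ δ - 1 := by omega
    have := hmin A hA hAne'
    omega
  -- conclude via dimension counting
  have hdim : Module.finrank F C ≤ Fintype.card {p : Fin m × Fin n // P p} := by
    have := LinearMap.finrank_le_finrank_of_injective hinj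
    rwa [Module.finrank_fintype_fun_eq_card] at this
  refine le_trans hdim (le_of_eq ?_)
  -- count the dots column by column
  have hequiv : {p : Fin m × Fin n // P p} ≃
      Σ c : Fin n, {r : Fin m // i ≤ (r : ℕ) ∧ (r : ℕ) < γ (c : ℕ) ∧ (c : ℕ) + k < n} :=
    { toFun := fun x => ⟨x.1.2, ⟨x.1.1, x.2⟩⟩
      invFun := fun y => ⟨(y.2.1, y.1), y.2.2⟩
      left_inv := fun x => rfl
      right_inv := fun y => rfl }
  rw [Fintype.card_congr hequiv, Fintype.card_sigma]
  rw [Finset.sum_filter]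
  refine Finset.sum_congr rfl fun c _ => ?_
  by_cases hc : (c : ℕ) + k < n
  · rw [if_pos hc]
    have : Fintype.card {r : Fin m // i ≤ (r : ℕ) ∧ (r : ℕ) < γ (c : ℕ) ∧ (c : ℕ) + k < n}
        = (Finset.univ.filter fun r : Fin m => i ≤ (r : ℕ) ∧ (r : ℕ) < γ (c : ℕ)).card := by
      rw [Fintype.card_subtype]
      congr 1
      ext r
      simp [hc]
    rw [this, Finset.card_filter]
    rw [Fin.sum_univ_eq_sum_range (fun r : ℕ => if i ≤ r ∧ r < γ (c : ℕ) then 1 else 0)]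
    rw [← Finset.card_filter]
    have hfe : (Finset.range m).filter (fun r => i ≤ r ∧ r < γ (c : ℕ))
        = Finset.Ico i (γ (c : ℕ)) := by
      ext r
      simp only [Finset.mem_filter, Finset.mem_range, Finset.mem_Ico]
      have := hγm c
      omega
    rw [hfe, Nat.card_Ico]
  · rw [if_neg hc]
    rw [Fintype.card_eq_zero_iff]
    exact ⟨fun r => absurd r.2.2.2 hc⟩
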